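/- Let X be a simplicial set satisfying Kan(m,j) for all m ≥ 1 and 0 ≤ j ≤ m, and Kan!(m,j) for all m ≥ 3 and 0 ≤ j ≤ m (a 2-groupoid). For every η ∈ X₂ with d₂η degenerate (d₂η = s₀(v) for some v ∈ X₀), there exists a unique η' ∈ X₂ for which there is a 3-simplex θ ∈ X₃ with d₃θ = η, d₂θ = s₀(d₁η), d₁θ = s₁(d₁η) and d₀θ = η'. This η' satisfies d₂η' = d₀η, d₁η' = d₁η and d₀η' = s₀(d₀(d₁η)) (so its d₀-face is degenerate), and the assignment η ↦ η' is a bijection from {η ∈ X₂ : d₂η is degenerate} onto {η' ∈ X₂ : d₀η' is degenerate}. -/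

import Mathlib

open CategoryTheory Simplicial

/-- `Kan(m,j)`: every map from the horn `Λ[m,j]` to `X` extends along the horn
inclusion to a map `Δ[m] ⟶ X`. -/
def SSet.KanCond (X : SSet.{u}) (m : ℕ) (j : Fin (m + 1)) : Prop :=
  ∀ σ₀ : (Λ[m, j] : SSet) ⟶ X, ∃ σ : Δ[m] ⟶ X, σ₀ = Λ[m, j].ι ≫ σ

/-- `Kan!(m,j)`: every map from the horn `Λ[m,j]` to `X` extends *uniquely* along the
horn inclusion to a map `Δ[m] ⟶ X`. -/
def SSet.KanCondUnique (X : SSet.{u}) (m : ℕ) (j : Fin (m + 1)) : Prop :=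
  ∀ σ₀ : (Λ[m, j] : SSet) ⟶ X, ∃! σ : Δ[m] ⟶ X, σ₀ = Λ[m, j].ι ≫ σ

/-- The relation `R η η'`: there is a 3-simplex `θ` with `d₃ θ = η`,
`d₂ θ = s₀ (d₁ η)`, `d₁ θ = s₁ (d₁ η)` and `d₀ θ = η'`. -/
def SSet.FlipRel (X : SSet.{u}) (η η' : X _⦋2⦌) : Prop :=
  ∃ θ : X _⦋3⦌, X.δ 3 θ = η ∧ X.δ 2 θ = X.σ 0 (X.δ 1 η) ∧
    X.δ 1 θ = X.σ 1 (X.δ 1 η) ∧ X.δ 0 θ = η'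

namespace SSet

open SimplexCategory

universe u

variable {X : SSet.{u}}

section PointwiseIdentities

lemma dd {n} {i j : Fin (n+2)} (H : i ≤ j) (θ : X _⦋n+2⦌) :
    X.δ i (X.δ j.succ θ) = X.δ j (X.δ i.castSucc θ) := by have := ConcreteCategory.congr_hom (X.δ_comp_δ H) θ; simpa only [ConcreteCategory.comp_apply, ConcreteCategory.id_apply] using this

lemma dds {n} {i : Fin (n+2)} (θ : X _⦋n+2⦌) :
    X.δ i (X.δ i.castSucc θ) = X.δ i (X.δ i.succ θ) := by have := ConcreteCategory.congr_hom (X.δ_comp_δ_self (i := i)) θ; simpa only [ConcreteCategory.comp_apply, ConcreteCategory.id_apply] using this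

lemma ds_self {n} {i : Fin (n+1)} (a : X _⦋n⦌) : X.δ i.castSucc (X.σ i a) = a :=
  by have := ConcreteCategory.congr_hom (X.δ_comp_σ_self (i := i)) a; simpa only [ConcreteCategory.comp_apply, ConcreteCategory.id_apply] using this

lemma ds_succ {n} {i : Fin (n+1)} (a : X _⦋n⦌) : X.δ i.succ (X.σ i a) = a :=
  by have := ConcreteCategory.congr_hom (X.δ_comp_σ_succ (i := i)) a; simpa only [ConcreteCategory.comp_apply, ConcreteCategory.id_apply] using this

lemma ds_le {n} {i : Fin (n+2)} {j : Fin (n+1)} (H : i ≤ j.castSucc) (a : X _⦋n+1⦌) :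
    X.δ i.castSucc (X.σ j.succ a) = X.σ j (X.δ i a) := by have := ConcreteCategory.congr_hom (X.δ_comp_σ_of_le H) a; simpa only [ConcreteCategory.comp_apply, ConcreteCategory.id_apply] using this

lemma ds_gt {n} {i : Fin (n+2)} {j : Fin (n+1)} (H : j.castSucc < i) (a : X _⦋n+1⦌) :
    X.δ i.succ (X.σ j.castSucc a) = X.σ j (X.δ i a) := by have := ConcreteCategory.congr_hom (X.δ_comp_σ_of_gt H) a; simpa only [ConcreteCategory.comp_apply, ConcreteCategory.id_apply] using this

lemma dA1 (θ : X _⦋3⦌) : X.δ 0 (X.δ 2 θ) = X.δ 1 (X.δ 0 θ) := dd (i := 0) (j := 1) (by decide) θ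
lemma dA2 (θ : X _⦋3⦌) : X.δ 0 (X.δ 3 θ) = X.δ 2 (X.δ 0 θ) := dd (i := 0) (j := 2) (by decide) θ
lemma dA3 (θ : X _⦋3⦌) : X.δ 0 (X.δ 0 θ) = X.δ 0 (X.δ 1 θ) := dds (i := (0 : Fin 3)) θ
lemma dA4 (θ : X _⦋3⦌) : X.δ 1 (X.δ 3 θ) = X.δ 2 (X.δ 1 θ) := dd (i := 1) (j := 2) (by decide) θ
lemma dA5 (θ : X _⦋3⦌) : X.δ 2 (X.δ 3 θ) = X.δ 2 (X.δ 2 θ) := dd (i := 2) (j := 2) le_rfl θ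
lemma dB1 (η : X _⦋2⦌) : X.δ 1 (X.δ 2 η) = X.δ 1 (X.δ 1 η) := dd (i := 1) (j := 1) le_rfl η
lemma dB2 (η : X _⦋2⦌) : X.δ 0 (X.δ 0 η) = X.δ 0 (X.δ 1 η) := dds (i := (0 : Fin 2)) η
lemma dC1 (a : X _⦋1⦌) : X.δ 1 (X.σ 0 a) = a := ds_succ (i := 0) a
lemma dC2 (a : X _⦋1⦌) : X.δ 0 (X.σ 0 a) = a := ds_self (i := 0) a
lemma dC3 (a : X _⦋1⦌) : X.δ 1 (X.σ 1 a) = a := ds_self (i := 1) a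
lemma dC4 (a : X _⦋1⦌) : X.δ 2 (X.σ 1 a) = a := ds_succ (i := 1) a
lemma dC5 (a : X _⦋1⦌) : X.δ 2 (X.σ 0 a) = X.σ 0 (X.δ 1 a) := ds_gt (i := 1) (j := 0) (by decide) a
lemma dC6 (a : X _⦋1⦌) : X.δ 0 (X.σ 1 a) = X.σ 0 (X.δ 0 a) := ds_le (i := 0) (j := 0) (by decide) a
lemma dD1 (v : X _⦋0⦌) : X.δ 1 (X.σ 0 v) = v := ds_succ (i := 0) v
lemma dD2 (v : X _⦋0⦌) : X.δ 0 (X.σ 0 v) = v := ds_self (i := 0) v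

end PointwiseIdentities

section HornMk

lemma horn_val_lt {n : ℕ} {i : Fin (n+3)}
    (x : ∀ j : Fin (n+3), j ≠ i → X _⦋n+1⦌)
    (hx : ∀ (a b : Fin (n+2)), a ≤ b → ∀ (hb : b.succ ≠ i) (ha : a.castSucc ≠ i),
      X.δ a (x b.succ hb) = X.δ b (x a.castSucc ha))
    {m : ℕ} (g : (⦋m⦌ : SimplexCategory) ⟶ ⦋n+2⦌) {j k : Fin (n+3)}
    (hjk : j < k) (hj : j ≠ i) (hk : k ≠ i)
    (hgj : ∀ l, g.toOrderHom l ≠ j) (hgk : ∀ l, g.toOrderHom l ≠ k) :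
    X.map (factor_δ g j).op (x j hj) = X.map (factor_δ g k).op (x k hk) := by
  obtain ⟨b, rfl⟩ : ∃ b : Fin (n+2), b.succ = k := by
    refine ⟨k.pred ?_, Fin.succ_pred _ _⟩
    rintro rfl; exact (Fin.not_lt_zero j) hjk
  obtain ⟨a, rfl⟩ : ∃ a : Fin (n+2), a.castSucc = j := by
    refine ⟨j.castPred ?_, Fin.castSucc_castPred _ _⟩
    rintro rfl; exact absurd hjk (by simp [Fin.lt_iff_val_lt_val])
  have hab : a ≤ b := Fin.castSucc_lt_succ_iff.mp hjk
  have hg₁ : factor_δ g a.castSucc ≫ δ a.castSucc = g := factor_δ_spec g _ hgj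
  have hg₂ : factor_δ g b.succ ≫ δ b.succ = g := factor_δ_spec g _ hgk
  set g₁ := factor_δ g a.castSucc with hg₁def
  set g₂ := factor_δ g b.succ with hg₂def
  have hm₁ : ∀ l, g₁.toOrderHom l ≠ b := by
    intro l hl
    apply hgk (l)
    have := congrArg (fun f => f.toOrderHom l) hg₁
    simp only [comp_toOrderHom, OrderHom.comp_coe, Function.comp_apply] at this
    rw [← this, hl]
    show (a.castSucc).succAbove b = b.succ
    exact Fin.succAbove_castSucc_of_le a b hab
  have hm₂ : ∀ l, g₂.toOrderHom l ≠ a := by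
    intro l hl
    apply hgj (l)
    have := congrArg (fun f => f.toOrderHom l) hg₂
    simp only [comp_toOrderHom, OrderHom.comp_coe, Function.comp_apply] at this
    rw [← this, hl]
    show (b.succ).succAbove a = a.castSucc
    exact Fin.succAbove_succ_of_le b a hab
  have hs₁ : factor_δ g₁ b ≫ δ b = g₁ := factor_δ_spec g₁ _ hm₁
  have hs₂ : factor_δ g₂ a ≫ δ a = g₂ := factor_δ_spec g₂ _ hm₂
  have key : factor_δ g₁ b = factor_δ g₂ a := by
    have lhs : factor_δ g₁ b ≫ (δ b ≫ δ a.castSucc) = g := by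
      rw [← Category.assoc, hs₁, hg₁]
    have rhs : factor_δ g₂ a ≫ (δ b ≫ δ a.castSucc) = g := by
      rw [← SimplexCategory.δ_comp_δ hab, ← Category.assoc, hs₂, hg₂]
    have := lhs.trans rhs.symm
    rwa [← Category.assoc, ← Category.assoc, cancel_mono, cancel_mono] at this
  have mca : ∀ {m' : SimplexCategory} (p : m' ⟶ ⦋n⦌) (c : Fin (n+2)) (y : X _⦋n+1⦌),
      X.map (p ≫ δ c).op y = X.map p.op (X.δ c y) := by
    intros m' p c y; rw [op_comp, X.map_comp]; rfl
  calc X.map g₁.op (x a.castSucc hj)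
      = X.map (factor_δ g₁ b ≫ δ b).op (x a.castSucc hj) := by rw [hs₁]
    _ = X.map (factor_δ g₁ b).op (X.δ b (x a.castSucc hj)) := mca _ _ _
    _ = X.map (factor_δ g₂ a).op (X.δ a (x b.succ hk)) := by rw [key, hx a b hab hk hj]
    _ = X.map (factor_δ g₂ a ≫ δ a).op (x b.succ hk) := (mca _ _ _).symm
    _ = X.map g₂.op (x b.succ hk) := by rw [hs₂]

lemma horn_val_eq {n : ℕ} {i : Fin (n+3)}
    (x : ∀ j : Fin (n+3), j ≠ i → X _⦋n+1⦌)
    (hx : ∀ (a b : Fin (n+2)), a ≤ b → ∀ (hb : b.succ ≠ i) (ha : a.castSucc ≠ i),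
      X.δ a (x b.succ hb) = X.δ b (x a.castSucc ha))
    {m : ℕ} (g : (⦋m⦌ : SimplexCategory) ⟶ ⦋n+2⦌) {j k : Fin (n+3)}
    (hj : j ≠ i) (hk : k ≠ i)
    (hgj : ∀ l, g.toOrderHom l ≠ j) (hgk : ∀ l, g.toOrderHom l ≠ k) :
    X.map (factor_δ g j).op (x j hj) = X.map (factor_δ g k).op (x k hk) := by
  rcases lt_trichotomy j k with h | h | h
  · exact horn_val_lt x hx g h hj hk hgj hgk
  · subst h; rfl
  · exact (horn_val_lt x hx g h hk hj hgk hgj).symm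

lemma horn_exists_missing {n : ℕ} {i : Fin (n+3)} {m : SimplexCategoryᵒᵖ}
    (f : (Λ[n+2, i] : SSet.{u}).obj m) :
    ∃ j, ¬j = i ∧ ∀ l, (SSet.stdSimplex.objEquiv f.1).toOrderHom l ≠ j := by
  have hf := f.2
  simp [← Set.univ_subset_iff, Set.subset_def, SSet.stdSimplex.asOrderHom, not_or,
    SSet.stdSimplex.objEquiv, Equiv.ulift, SSet.horn, Equiv.coe_fn_mk] at hf
  exact hf

/-- The underlying morphism in `SimplexCategory` of a simplex of the horn. -/
def hornHom {n : ℕ} {i : Fin (n+3)} {m : SimplexCategoryᵒᵖ}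
    (f : (Λ[n+2, i] : SSet.{u}).obj m) : (⦋m.unop.len⦌ : SimplexCategory) ⟶ ⦋n+2⦌ :=
  SSet.stdSimplex.objEquiv f.1

lemma horn_exists_missing' {n : ℕ} {i : Fin (n+3)} {m : SimplexCategoryᵒᵖ}
    (f : (Λ[n+2, i] : SSet.{u}).obj m) :
    ∃ j, ¬j = i ∧ ∀ l, (hornHom f).toOrderHom l ≠ j := horn_exists_missing f

/-- The value of the horn map at a simplex of the horn. -/
noncomputable def hornValue {n : ℕ} {i : Fin (n+3)}
    (x : ∀ j : Fin (n+3), j ≠ i → X _⦋n+1⦌)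
    (m : SimplexCategoryᵒᵖ) (f : (Λ[n+2, i] : SSet.{u}).obj m) : X.obj m :=
  X.map (factor_δ (hornHom f) (horn_exists_missing' f).choose).op
    (x _ (horn_exists_missing' f).choose_spec.1)

lemma hornValue_eq {n : ℕ} {i : Fin (n+3)}
    (x : ∀ j : Fin (n+3), j ≠ i → X _⦋n+1⦌)
    (hx : ∀ (a b : Fin (n+2)), a ≤ b → ∀ (hb : b.succ ≠ i) (ha : a.castSucc ≠ i),
      X.δ a (x b.succ hb) = X.δ b (x a.castSucc ha))
    (m : SimplexCategoryᵒᵖ) (f : (Λ[n+2, i] : SSet.{u}).obj m)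
    {j : Fin (n+3)} (hj : j ≠ i) (hmiss : ∀ l, (hornHom f).toOrderHom l ≠ j) :
    hornValue x m f = X.map (factor_δ (hornHom f) j).op (x j hj) :=
  horn_val_eq x hx (hornHom f) (horn_exists_missing' f).choose_spec.1 hj
    (horn_exists_missing' f).choose_spec.2 hmiss

lemma hornHom_map {n : ℕ} {i : Fin (n+3)} {m m' : SimplexCategoryᵒᵖ} (φ : m ⟶ m')
    (f : (Λ[n+2, i] : SSet.{u}).obj m) :
    hornHom ((Λ[n+2, i] : SSet.{u}).map φ f) = φ.unop ≫ hornHom f := by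
  show SSet.stdSimplex.objEquiv (Δ[n+2].map φ f.1) = _
  rw [SSet.stdSimplex.map_apply, Equiv.apply_symm_apply]
  rfl

/-- Build a horn map from compatible faces. -/
noncomputable def hornMk {n : ℕ} (i : Fin (n+3))
    (x : ∀ j : Fin (n+3), j ≠ i → X _⦋n+1⦌)
    (hx : ∀ (a b : Fin (n+2)), a ≤ b → ∀ (hb : b.succ ≠ i) (ha : a.castSucc ≠ i),
      X.δ a (x b.succ hb) = X.δ b (x a.castSucc ha)) :
    (Λ[n+2, i] : SSet.{u}) ⟶ X where
  app m := TypeCat.ofHom (fun f => hornValue x m f)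
  naturality m m' φ := by
    ext f
    show hornValue x m' ((Λ[n+2, i] : SSet.{u}).map φ f) = X.map φ (hornValue x m f)
    obtain ⟨j, hj, hmiss⟩ := horn_exists_missing' f
    have hmiss' : ∀ l, (hornHom ((Λ[n+2, i] : SSet.{u}).map φ f)).toOrderHom l ≠ j := by
      intro l
      rw [hornHom_map]
      exact hmiss _
    rw [hornValue_eq x hx m f hj hmiss, hornValue_eq x hx m' _ hj hmiss']
    have hfac : factor_δ (hornHom ((Λ[n+2, i] : SSet.{u}).map φ f)) j
        = φ.unop ≫ factor_δ (hornHom f) j := by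
      have h1 : factor_δ (hornHom ((Λ[n+2, i] : SSet.{u}).map φ f)) j ≫ δ j
          = (φ.unop ≫ factor_δ (hornHom f) j) ≫ δ j := by
        rw [factor_δ_spec _ j hmiss', hornHom_map, Category.assoc,
          factor_δ_spec (hornHom f) j hmiss]
      rwa [cancel_mono] at h1
    rw [hfac, op_comp, X.map_comp]
    rfl

lemma hornHom_face {n : ℕ} (i j : Fin (n+3)) (h : j ≠ i) :
    hornHom (horn.face i j h) = δ j :=
  Equiv.apply_symm_apply _ _

lemma hornMk_face {n : ℕ} (i : Fin (n+3))
    (x : ∀ j : Fin (n+3), j ≠ i → X _⦋n+1⦌)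
    (hx : ∀ (a b : Fin (n+2)), a ≤ b → ∀ (hb : b.succ ≠ i) (ha : a.castSucc ≠ i),
      X.δ a (x b.succ hb) = X.δ b (x a.castSucc ha))
    (j : Fin (n+3)) (h : j ≠ i) :
    (hornMk i x hx).app _ (horn.face i j h) = x j h := by
  show hornValue x _ _ = _
  set F : (Λ[n+2, i] : SSet.{u}).obj (Opposite.op ⦋n+1⦌) := horn.face i j h with hF
  have hface : hornHom F = δ j := Equiv.apply_symm_apply _ _
  have hmiss : ∀ l, (hornHom F).toOrderHom l ≠ j := by
    intro l
    rw [hface]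
    exact Fin.succAbove_ne j l
  rw [hornValue_eq x hx _ F h hmiss]
  have hid : factor_δ (hornHom F) j = 𝟙 _ := by
    have hspec : factor_δ (hornHom F) j ≫ δ j = hornHom F := factor_δ_spec (hornHom F) j hmiss
    have h2 : factor_δ (hornHom F) j ≫ δ j = 𝟙 _ ≫ δ j := by
      rw [Category.id_comp, hspec, hface]
    rwa [cancel_mono] at h2
  rw [hid, op_id]
  exact ConcreteCategory.congr_hom (X.map_id (Opposite.op ⦋n+1⦌)) (x j h)

end HornMk

section Fillers

lemma face_of_filler {n : ℕ} (θ : X _⦋n+2⦌) (i j : Fin (n+3)) (h : j ≠ i) :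
    (Λ[n+2, i].ι ≫ (SSet.yonedaEquiv (X := X) (n := ⦋n+2⦌)).symm θ).app _
      (SSet.horn.face i j h) = X.δ j θ := rfl

lemma exists_filler {n : ℕ} (i : Fin (n+3)) (hK : X.KanCond (n+2) i)
    (x : ∀ j : Fin (n+3), j ≠ i → X _⦋n+1⦌)
    (hx : ∀ (a b : Fin (n+2)), a ≤ b → ∀ (hb : b.succ ≠ i) (ha : a.castSucc ≠ i),
      X.δ a (x b.succ hb) = X.δ b (x a.castSucc ha)) :
    ∃ θ : X _⦋n+2⦌, ∀ j (hj : j ≠ i), X.δ j θ = x j hj := by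
  obtain ⟨σ, hσ⟩ := hK (hornMk i x hx)
  refine ⟨SSet.yonedaEquiv (X := X) (n := ⦋n+2⦌) σ, fun j hj => ?_⟩
  have h2 := congrArg (fun τ : (Λ[n+2, i] : SSet.{u}) ⟶ X =>
    τ.app (Opposite.op ⦋n+1⦌) (SSet.horn.face i j hj)) hσ
  simp only at h2
  rw [hornMk_face i x hx j hj] at h2
  rw [h2]
  conv_rhs => rw [← Equiv.symm_apply_apply (SSet.yonedaEquiv (X := X) (n := ⦋n+2⦌)) σ]
  exact (face_of_filler _ i j hj).symm

lemma unique_filler {n : ℕ} (i : Fin (n+3)) (hU : X.KanCondUnique (n+2) i)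
    {θ θ' : X _⦋n+2⦌} (h : ∀ j, j ≠ i → X.δ j θ = X.δ j θ') : θ = θ' := by
  set s := (SSet.yonedaEquiv (X := X) (n := ⦋n+2⦌)).symm θ with hs
  set s' := (SSet.yonedaEquiv (X := X) (n := ⦋n+2⦌)).symm θ' with hs'
  have hress : Λ[n+2, i].ι ≫ s = Λ[n+2, i].ι ≫ s' := by
    apply SSet.horn.hom_ext
    intro j hj
    show (Λ[n+2, i].ι ≫ s).app _ (SSet.horn.face i j hj)
      = (Λ[n+2, i].ι ≫ s').app _ (SSet.horn.face i j hj)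
    rw [face_of_filler, face_of_filler]
    exact h j hj
  obtain ⟨σ, hσ, huniq⟩ := hU (Λ[n+2, i].ι ≫ s)
  have h1 : s = σ := huniq s rfl
  have h2 : s' = σ := huniq s' hress
  have h3 : s = s' := h1.trans h2.symm
  have h4 := congrArg (SSet.yonedaEquiv (X := X) (n := ⦋n+2⦌)) h3
  simpa [hs, hs'] using h4

lemma filler30 (hK : X.KanCond 3 (0 : Fin 4)) (x₁ x₂ x₃ : X _⦋2⦌)
    (h12 : X.δ 1 x₂ = X.δ 1 x₁) (h13 : X.δ 1 x₃ = X.δ 2 x₁) (h23 : X.δ 2 x₃ = X.δ 2 x₂) :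
    ∃ θ : X _⦋3⦌, X.δ 1 θ = x₁ ∧ X.δ 2 θ = x₂ ∧ X.δ 3 θ = x₃ := by
  obtain ⟨θ, hθ⟩ := exists_filler (n := 1) (0 : Fin 4) hK (fun j _ => ![x₃, x₁, x₂, x₃] j)
    (by
      intro a b hab hb ha
      fin_cases a <;> fin_cases b
      · exact absurd rfl ha
      · exact absurd rfl ha
      · exact absurd rfl ha
      · exact absurd hab (by decide)
      · exact h12
      · exact h13
      · exact absurd hab (by decide)
      · exact absurd hab (by decide)
      · exact h23)
  exact ⟨θ, hθ 1 (by decide), hθ 2 (by decide), hθ 3 (by decide)⟩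

lemma filler33 (hK : X.KanCond 3 (3 : Fin 4)) (x₀ x₁ x₂ : X _⦋2⦌)
    (h01 : X.δ 0 x₁ = X.δ 0 x₀) (h02 : X.δ 0 x₂ = X.δ 1 x₀) (h12 : X.δ 1 x₂ = X.δ 1 x₁) :
    ∃ θ : X _⦋3⦌, X.δ 0 θ = x₀ ∧ X.δ 1 θ = x₁ ∧ X.δ 2 θ = x₂ := by
  obtain ⟨θ, hθ⟩ := exists_filler (n := 1) (3 : Fin 4) hK (fun j _ => ![x₀, x₁, x₂, x₀] j)
    (by
      intro a b hab hb ha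
      fin_cases a <;> fin_cases b
      · exact h01
      · exact h02
      · exact absurd rfl hb
      · exact absurd hab (by decide)
      · exact h12
      · exact absurd rfl hb
      · exact absurd hab (by decide)
      · exact absurd hab (by decide)
      · exact absurd rfl hb)
  exact ⟨θ, hθ 0 (by decide), hθ 1 (by decide), hθ 2 (by decide)⟩

end Fillers

end SSet

/-- In a 2-groupoid `X`, every 2-simplex `η` with degenerate `d₂`-face has a unique
partner `η'` related to it by a 3-simplex as in `SSet.FlipRel`; this `η'` has
`d₂ η' = d₀ η`, `d₁ η' = d₁ η` and degenerate `d₀`-face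
`d₀ η' = s₀ (d₀ (d₁ η))`, and the assignment `η ↦ η'` is a bijection from the set of
2-simplices with degenerate `d₂`-face onto the set of 2-simplices with degenerate
`d₀`-face. -/
theorem bigon_flip_bijection (X : SSet.{u})
    (h₁ : ∀ (m : ℕ), 1 ≤ m → ∀ j : Fin (m + 1), X.KanCond m j)
    (h₂ : ∀ (m : ℕ), 3 ≤ m → ∀ j : Fin (m + 1), X.KanCondUnique m j) :
    (∀ η : X _⦋2⦌, (∃ v : X _⦋0⦌, X.δ 2 η = X.σ 0 v) →
      (∃! η' : X _⦋2⦌, X.FlipRel η η') ∧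
      (∀ η' : X _⦋2⦌, X.FlipRel η η' →
        X.δ 2 η' = X.δ 0 η ∧ X.δ 1 η' = X.δ 1 η ∧
        X.δ 0 η' = X.σ 0 (X.δ 0 (X.δ 1 η)))) ∧
    (∀ η' : X _⦋2⦌, (∃ v : X _⦋0⦌, X.δ 0 η' = X.σ 0 v) →
      ∃! η : X _⦋2⦌, (∃ v : X _⦋0⦌, X.δ 2 η = X.σ 0 v) ∧ X.FlipRel η η') := by
  classical
  have hK30 : X.KanCond 3 (0 : Fin 4) := h₁ 3 (by norm_num) 0
  have hK33 : X.KanCond 3 (3 : Fin 4) := h₁ 3 (by norm_num) 3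
  have hU30 : X.KanCondUnique 3 (0 : Fin 4) := h₂ 3 le_rfl 0
  have hU33 : X.KanCondUnique 3 (3 : Fin 4) := h₂ 3 le_rfl 3
  have faceprop : ∀ η η' : X _⦋2⦌, X.FlipRel η η' →
      X.δ 2 η' = X.δ 0 η ∧ X.δ 1 η' = X.δ 1 η ∧
        X.δ 0 η' = X.σ 0 (X.δ 0 (X.δ 1 η)) := by
    rintro η η' ⟨θ, h3, h2, h1, h0⟩
    refine ⟨?_, ?_, ?_⟩
    · rw [← h0, ← SSet.dA2, h3]
    · rw [← h0, ← SSet.dA1, h2, SSet.dC2]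
    · rw [← h0, SSet.dA3, h1, SSet.dC6]
  constructor
  · rintro η ⟨v, hv⟩
    have hd1e : X.δ 1 (X.δ 1 η) = v := by
      rw [← SSet.dB1, hv, SSet.dD1]
    constructor
    · obtain ⟨θ, hθ1, hθ2, hθ3⟩ := SSet.filler30 hK30 (X.σ 1 (X.δ 1 η)) (X.σ 0 (X.δ 1 η)) η
        (by rw [SSet.dC1, SSet.dC3])
        (by rw [SSet.dC4])
        (by rw [SSet.dC5, hd1e]; exact hv)
      refine ⟨X.δ 0 θ, ⟨θ, hθ3, hθ2, hθ1, rfl⟩, ?_⟩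
      rintro η' ⟨θ', hθ'3, hθ'2, hθ'1, hθ'0⟩
      have hth : θ' = θ := by
        apply SSet.unique_filler (n := 1) (0 : Fin 4) hU30
        intro j hj
        fin_cases j
        · exact absurd rfl hj
        · exact hθ'1.trans hθ1.symm
        · exact hθ'2.trans hθ2.symm
        · exact hθ'3.trans hθ3.symm
      rw [← hθ'0, hth]
    · intro η' hrel
      exact faceprop η η' hrel
  · rintro η' ⟨v, hv⟩
    have hd0e : X.δ 0 (X.δ 1 η') = v := by
      rw [← SSet.dB2, hv, SSet.dD2]
    obtain ⟨θ, hθ0, hθ1, hθ2⟩ := SSet.filler33 hK33 η' (X.σ 1 (X.δ 1 η')) (X.σ 0 (X.δ 1 η'))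
      (by rw [SSet.dC6, hd0e, hv])
      (by rw [SSet.dC2])
      (by rw [SSet.dC1, SSet.dC3])
    have hd1 : X.δ 1 (X.δ 3 θ) = X.δ 1 η' := by
      rw [SSet.dA4, hθ1, SSet.dC4]
    refine ⟨X.δ 3 θ, ⟨⟨X.δ 1 (X.δ 1 η'), ?_⟩, ⟨θ, rfl, ?_, ?_, hθ0⟩⟩, ?_⟩
    · rw [SSet.dA5, hθ2, SSet.dC5]
    · rw [hd1, hθ2]
    · rw [hd1, hθ1]
    · rintro η ⟨-, ⟨θ', hθ'3, hθ'2, hθ'1, hθ'0⟩⟩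
      have he : X.δ 1 η = X.δ 1 η' := by
        rw [← hθ'0, ← SSet.dA1, hθ'2, SSet.dC2]
      have hth : θ' = θ := by
        apply SSet.unique_filler (n := 1) (3 : Fin 4) hU33
        intro j hj
        fin_cases j
        · exact hθ'0.trans hθ0.symm
        · exact (show X.δ 1 θ' = X.δ 1 θ by rw [hθ'1, hθ1, he])
        · exact (show X.δ 2 θ' = X.δ 2 θ by rw [hθ'2, hθ2, he])
        · exact absurd rfl hj
      rw [← hθ'3, hth]
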